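/- Let A be an n×n Hermitian positive semidefinite complex matrix with eigenvalues λ₁ ≥ ... ≥ λₙ. Then for every k ≤ n, the sum λ₁ + ... + λₖ equals the maximum of Σ_{i=1}^{k} ⟨A vᵢ, vᵢ⟩ over all orthonormal families (v₁, ..., vₖ) in ℂⁿ. -/

import Mathlib

lemma keyNat (n k : ℕ) (hk : k ≤ n) (L C : ℕ → ℝ)
    (hmono : ∀ i j, i ≤ j → L j ≤ L i)
    (hC0 : ∀ i, 0 ≤ C i) (hC1 : ∀ i, C i ≤ 1)
    (hsum : ∑ i ∈ Finset.range n, C i = k) :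
    ∑ i ∈ Finset.range n, L i * C i ≤ ∑ i ∈ Finset.range k, L i := by
  have h1 : ∀ i, L i * C i ≤ L k * C i + (if i < k then L i - L k else 0) := by
    intro i
    by_cases h : i < k
    · simp only [if_pos h]
      nlinarith [hmono i k h.le, hC1 i, hC0 i]
    · simp only [if_neg h]
      nlinarith [hmono k i (le_of_not_gt h), hC0 i]
  calc ∑ i ∈ Finset.range n, L i * C i
      ≤ ∑ i ∈ Finset.range n, (L k * C i + if i < k then L i - L k else 0) :=
        Finset.sum_le_sum fun i _ => h1 i
    _ = L k * (∑ i ∈ Finset.range n, C i)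
        + ∑ i ∈ Finset.range n, (if i < k then L i - L k else 0) := by
        rw [Finset.sum_add_distrib, Finset.mul_sum]
    _ = L k * k + ∑ i ∈ Finset.range k, (L i - L k) := by
        rw [hsum]
        congr 1
        rw [← Finset.sum_subset (Finset.range_subset_range.2 hk)
          (fun x _ hx => if_neg (by simpa using hx))]
        exact Finset.sum_congr rfl fun i hi => if_pos (Finset.mem_range.1 hi)
    _ = ∑ i ∈ Finset.range k, L i := by
        rw [Finset.sum_sub_distrib, Finset.sum_const, Finset.card_range, nsmul_eq_mul]
        ring

open scoped ComplexOrder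
theorem stmt_5 {n : ℕ} (A : Matrix (Fin n) (Fin n) ℂ) (hA : A.IsHermitian)
    (hpsd : A.PosSemidef)
    (lam : Fin n → ℝ) (hlam : Antitone lam)
    (henum : ∃ σ : Equiv.Perm (Fin n), ∀ i, lam i = hA.eigenvalues (σ i))
    (k : ℕ) (hk : k ≤ n) :
    IsGreatest {r : ℝ | ∃ v : Fin k → EuclideanSpace ℂ (Fin n), Orthonormal ℂ v ∧
        r = ∑ i : Fin k, Complex.re (inner ℂ ((Matrix.toEuclideanCLM (𝕜 := ℂ) A) (v i)) (v i))}
      (∑ i : Fin k, lam (Fin.castLE hk i)) := by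
  obtain ⟨σ, hσ⟩ := henum
  set T := Matrix.toEuclideanCLM (𝕜 := ℂ) A with hT
  set u := hA.eigenvectorBasis with hu
  set μ := hA.eigenvalues with hμ
  have hTu : ∀ j, T (u j) = (μ j : ℂ) • u j := by
    intro j
    have h := hA.mulVec_eigenvectorBasis j
    ext i
    have := congrFun h i
    simpa [hT, Matrix.ofLp_toEuclideanCLM] using this
  have hsym : ∀ x y : EuclideanSpace ℂ (Fin n), inner ℂ (T x) y = (inner ℂ x (T y) : ℂ) := by
    intro x y
    have hs := Matrix.isHermitian_iff_isSymmetric.1 hA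
    have := hs x y
    simpa [hT, ← Matrix.coe_toEuclideanCLM_eq_toEuclideanLin] using this
  have hinner1 : ∀ m, (inner ℂ (u m) (u m) : ℂ) = 1 := by
    intro m
    rw [inner_self_eq_norm_sq_to_K, u.orthonormal.1 m]
    norm_num
  have hlam0 : ∀ i, 0 ≤ lam i := fun i => (hσ i) ▸ hpsd.eigenvalues_nonneg (σ i)
  constructor
  · -- membership
    refine ⟨fun i => u (σ (Fin.castLE hk i)), ?_, ?_⟩
    · exact u.orthonormal.comp _ (σ.injective.comp (Fin.castLE_injective hk))
    · refine Finset.sum_congr rfl fun i _ => ?_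
      rw [hTu, inner_smul_left, hinner1, mul_one, hσ]
      simp
  · -- upper bound
    rintro r ⟨v, hv, rfl⟩
    have key1 : ∀ x : EuclideanSpace ℂ (Fin n),
        Complex.re (inner ℂ (T x) x) = ∑ j, μ j * ‖(inner ℂ (u j) x : ℂ)‖ ^ 2 := by
      intro x
      rw [← u.sum_inner_mul_inner (T x) x, Complex.re_sum]
      refine Finset.sum_congr rfl fun j _ => ?_
      rw [hsym, hTu, inner_smul_right, ← inner_conj_symm x (u j)]
      set z := (inner ℂ (u j) x : ℂ) with hz
      have h2 : (↑(μ j) * (starRingEnd ℂ) z) * z = ((μ j * ‖z‖ ^ 2 : ℝ) : ℂ) := by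
        rw [mul_assoc, RCLike.conj_mul]
        push_cast
        norm_num
      rw [h2, Complex.ofReal_re]
    have parseval : ∀ x : EuclideanSpace ℂ (Fin n),
        ∑ j, ‖(inner ℂ (u j) x : ℂ)‖ ^ 2 = ‖x‖ ^ 2 := by
      intro x
      have h0 := u.sum_inner_mul_inner x x
      have h1 : Complex.re (∑ j, (inner ℂ x (u j) * inner ℂ (u j) x : ℂ))
          = Complex.re (inner ℂ x x : ℂ) := by rw [h0]
      have hxx : Complex.re (inner ℂ x x : ℂ) = ‖x‖ ^ 2 := by
        rw [inner_self_eq_norm_sq_to_K]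
        norm_cast
      rw [Complex.re_sum, hxx] at h1
      rw [← h1]
      refine Finset.sum_congr rfl fun j _ => ?_
      rw [← inner_conj_symm x (u j), RCLike.conj_mul]
      norm_cast
    set c : Fin n → ℝ := fun j => ∑ i : Fin k, ‖(inner ℂ (u j) (v i) : ℂ)‖ ^ 2 with hc
    have total : ∑ i : Fin k, Complex.re (inner ℂ (T (v i)) (v i)) = ∑ j, μ j * c j := by
      simp only [key1, hc, Finset.mul_sum]
      rw [Finset.sum_comm]
    have hc0 : ∀ j, 0 ≤ c j := fun j => Finset.sum_nonneg fun i _ => sq_nonneg _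
    have hc1 : ∀ j, c j ≤ 1 := by
      intro j
      have hb := hv.sum_inner_products_le (u j) (s := Finset.univ)
      rw [u.orthonormal.1 j, one_pow] at hb
      calc c j = ∑ i : Fin k, ‖(inner ℂ (v i) (u j) : ℂ)‖ ^ 2 :=
            Finset.sum_congr rfl fun i _ => by rw [norm_inner_symm]
        _ ≤ 1 := hb
    have hcsum : ∑ j, c j = (k : ℝ) := by
      rw [Finset.sum_comm]
      calc ∑ i : Fin k, ∑ j, ‖(inner ℂ (u j) (v i) : ℂ)‖ ^ 2
          = ∑ i : Fin k, ‖v i‖ ^ 2 := Finset.sum_congr rfl fun i _ => parseval (v i)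
        _ = ∑ i : Fin k, (1 : ℝ) := Finset.sum_congr rfl fun i _ => by rw [hv.1 i, one_pow]
        _ = k := by simp
    set L : ℕ → ℝ := fun i => if h : i < n then lam ⟨i, h⟩ else 0 with hL
    set C : ℕ → ℝ := fun i => if h : i < n then c (σ ⟨i, h⟩) else 0 with hC
    have hmono : ∀ i j, i ≤ j → L j ≤ L i := by
      intro i j hij
      simp only [hL]
      by_cases hj : j < n
      · have hi : i < n := lt_of_le_of_lt hij hj
        rw [dif_pos hj, dif_pos hi]
        exact hlam (Fin.mk_le_mk.2 hij)
      · rw [dif_neg hj]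
        by_cases hi : i < n
        · rw [dif_pos hi]; exact hlam0 _
        · rw [dif_neg hi]
    have perm : ∑ j, μ j * c j = ∑ j, lam j * c (σ j) := by
      rw [← Equiv.sum_comp σ (fun j => μ j * c j)]
      exact Finset.sum_congr rfl fun j _ => by rw [hσ]
    have e1 : ∑ j : Fin n, lam j * c (σ j) = ∑ i ∈ Finset.range n, L i * C i := by
      rw [← Fin.sum_univ_eq_sum_range (fun i => L i * C i) n]
      exact Finset.sum_congr rfl fun j _ => by simp [hL, hC, j.isLt]
    have e2 : ∑ i : Fin k, lam (Fin.castLE hk i) = ∑ i ∈ Finset.range k, L i := by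
      rw [← Fin.sum_univ_eq_sum_range L k]
      refine Finset.sum_congr rfl fun i _ => ?_
      have hi : (i : ℕ) < n := lt_of_lt_of_le i.isLt hk
      simp only [hL, dif_pos hi]
      rfl
    have hC0' : ∀ i, 0 ≤ C i := by
      intro i
      simp only [hC]
      split
      · exact hc0 _
      · exact le_refl 0
    have hC1' : ∀ i, C i ≤ 1 := by
      intro i
      simp only [hC]
      split
      · exact hc1 _
      · exact zero_le_one
    have hCsum : ∑ i ∈ Finset.range n, C i = (k : ℝ) := by
      rw [← Fin.sum_univ_eq_sum_range C n]
      calc ∑ j : Fin n, C j.val = ∑ j : Fin n, c (σ j) :=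
            Finset.sum_congr rfl fun j _ => by simp [hC, j.isLt]
        _ = ∑ j, c j := Equiv.sum_comp σ c
        _ = k := hcsum
    rw [total, perm, e1, e2]
    exact keyNat n k hk L C hmono hC0' hC1' hCsum
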